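/- (Strategy Stealing) Let G=(V,E_L,E_R) be an achievement positional game. If there exists a bijection σ: V → V such that for every e∈E_R both σ(e)∈E_L and σ^{-1}(e)∈E_L, then Left has a non-losing strategy on G as first player. -/

import Mathlib

namespace APG

/-- The two players: Left and Right. -/
inductive Player : Type
  | L : Player
  | R : Player
deriving DecidableEq, Repr

/-- The opponent of a player. -/
def Player.other : Player → Player
  | .L => .R
  | .R => .L

/-- An achievement positional game: a finite vertex set together with the set of
blue edges (Left's winning sets) and the set of red edges (Right's winning sets). -/
structure Game : Type where
  V : Finset ℕ
  EL : Finset (Finset ℕ)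
  ER : Finset (Finset ℕ)

/-- The edges are nonempty subsets of the vertex set. -/
def WellFormed (G : Game) : Prop :=
  (∀ e ∈ G.EL, e ⊆ G.V ∧ e.Nonempty) ∧ (∀ e ∈ G.ER, e ⊆ G.V ∧ e.Nonempty)

/-- The winning sets of a given player. -/
def Game.edges (G : Game) : Player → Finset (Finset ℕ)
  | .L => G.EL
  | .R => G.ER

/-- The player who makes the `i`-th move (0-indexed) when `s` moves first. -/
def mover (s : Player) (i : ℕ) : Player := if i % 2 = 0 then s else s.other

/-- The set of vertices picked by player `p` along the history `h`
(the chronological list of the moves played so far), when `s` moved first. -/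
def picked (s p : Player) (h : List ℕ) : Finset ℕ :=
  ((Finset.range h.length).filter fun i => mover s i = p).image fun i => h.getD i 0

/-- The set `S` of picked vertices fills some edge of `E`. -/
def fills (E : Finset (Finset ℕ)) (S : Finset ℕ) : Prop := ∃ e ∈ E, e ⊆ S

/-- The game is over: some player has picked all the vertices of one of their edges. -/
def ended (G : Game) (s : Player) (h : List ℕ) : Prop :=
  fills G.EL (picked s .L h) ∨ fills G.ER (picked s .R h)

/-- `h` is a legal history: no vertex is picked twice, every picked vertex belongs to
the board, and no move is made after the game has ended. -/
def ValidHist (G : Game) (s : Player) (h : List ℕ) : Prop :=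
  h.Nodup ∧ (∀ x ∈ h, x ∈ G.V) ∧ ∀ k, k < h.length → ¬ ended G s (h.take k)

/-- A strategy: a map assigning to each position (history) a vertex to pick. -/
abbrev Strategy := List ℕ → ℕ

/-- Along `h`, every move of player `p` agrees with the strategy `σ`. -/
def Follows (s p : Player) (σ : Strategy) (h : List ℕ) : Prop :=
  ∀ k, k < h.length → mover s k = p → h.getD k 0 = σ (h.take k)

/-- A finished play: either the game has ended or all vertices have been picked. -/
def Complete (G : Game) (s : Player) (h : List ℕ) : Prop :=
  ended G s h ∨ h.length = G.V.card

/-- The strategy `σ` of player `p` always suggests a legal move (an unpicked vertex)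
whenever the game is not over and it is `p`'s turn. -/
def Legal (G : Game) (s p : Player) (σ : Strategy) : Prop :=
  ∀ h, ValidHist G s h → Follows s p σ h → ¬ ended G s h → h.length < G.V.card →
    mover s h.length = p → σ h ∈ G.V ∧ σ h ∉ h

/-- Player `p` has a winning strategy on `G` when `s` moves first: following it,
every finished play ends with `p` having filled one of their edges (and, the game
having ended right there, the opponent has not filled an edge first). -/
def WinsAs (G : Game) (s p : Player) : Prop :=
  ∃ σ : Strategy, Legal G s p σ ∧
    ∀ h, ValidHist G s h → Follows s p σ h → Complete G s h →
      fills (G.edges p) (picked s p h)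

/-- Player `p` has a non-losing strategy on `G` when `s` moves first: following it,
the opponent never fills one of their edges. -/
def NonLosingAs (G : Game) (s p : Player) : Prop :=
  ∃ σ : Strategy, Legal G s p σ ∧
    ∀ h, ValidHist G s h → Follows s p σ h → Complete G s h →
      ¬ fills (G.edges p.other) (picked s p.other h)

/-- The possible results of the game, for a fixed starting player. -/
inductive Result : Type
  | Lwin : Result
  | draw : Result
  | Rwin : Result
deriving DecidableEq, Repr

/-- The result of `G` with optimal play, when `s` moves first, is `r`:
a win for a player means that player has a winning strategy, a draw means
both players have non-losing strategies. -/
def resultIs (G : Game) (s : Player) : Result → Prop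
  | .Lwin => WinsAs G s .L
  | .Rwin => WinsAs G s .R
  | .draw => NonLosingAs G s .L ∧ NonLosingAs G s .R

/-- An outcome: the pair of results with optimal play
(when Left starts, when Right starts). -/
abbrev Outcome := Result × Result

/-- `G` has outcome `o`. -/
def hasOutcome (G : Game) (o : Outcome) : Prop :=
  resultIs G .L o.1 ∧ resultIs G .R o.2

/-- Numerical value of a result, from Left's point of view:
Right wins < draw < Left wins. -/
def Result.val : Result → ℕ
  | .Rwin => 0
  | .draw => 1
  | .Lwin => 2

/-- The partial order `≤_L` on outcomes, comparing both components simultaneously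
from Left's point of view. -/
def outLE (o o' : Outcome) : Prop := o.1.val ≤ o'.1.val ∧ o.2.val ≤ o'.2.val

def oL : Outcome := (.Lwin, .Lwin)
def oLminus : Outcome := (.Lwin, .draw)
def oN : Outcome := (.Lwin, .Rwin)
def oD : Outcome := (.draw, .draw)
def oRminus : Outcome := (.draw, .Rwin)
def oR : Outcome := (.Rwin, .Rwin)

/-- The updated game `G_u` after Left has picked `u`. -/
def subL (G : Game) (u : ℕ) : Game where
  V := G.V.erase u
  EL := G.EL.image fun e => e.erase u
  ER := G.ER.filter fun e => u ∉ e

/-- The updated game `G^u` after Right has picked `u`. -/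
def subR (G : Game) (u : ℕ) : Game where
  V := G.V.erase u
  EL := G.EL.filter fun e => u ∉ e
  ER := G.ER.image fun e => e.erase u

/-- The updated game `G_u^v` after Left has picked `u` and Right has picked `v`. -/
def updLR (G : Game) (u v : ℕ) : Game where
  V := (G.V.erase u).erase v
  EL := (G.EL.filter fun e => v ∉ e).image fun e => e.erase u
  ER := (G.ER.filter fun e => u ∉ e).image fun e => e.erase v

/-- The disjoint union of two games. -/
def gunion (G G' : Game) : Game where
  V := G.V ∪ G'.V
  EL := G.EL ∪ G'.EL
  ER := G.ER ∪ G'.ER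


open Classical in
lemma mem_picked {s p : Player} {h : List ℕ} {x : ℕ} :
    x ∈ picked s p h ↔ ∃ i, (i < h.length ∧ mover s i = p) ∧ h.getD i 0 = x := by
  simp [picked, Finset.mem_image, Finset.mem_filter, Finset.mem_range]

lemma mem_of_mem_picked {s p : Player} {h : List ℕ} {x : ℕ} (hx : x ∈ picked s p h) :
    x ∈ h := by
  rcases mem_picked.1 hx with ⟨i, ⟨hi, -⟩, he⟩
  rw [List.getD_eq_getElem h 0 hi] at he
  exact he ▸ List.getElem_mem _

lemma mem_picked_of_mem {s : Player} {h : List ℕ} {x : ℕ} (hx : x ∈ h) :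
    ∃ p, x ∈ picked s p h := by
  rcases List.mem_iff_getElem.1 hx with ⟨i, hi, he⟩
  exact ⟨mover s i, mem_picked.2 ⟨i, ⟨hi, rfl⟩, by rw [List.getD_eq_getElem h 0 hi]; exact he⟩⟩

lemma picked_append {s p : Player} {h : List ℕ} {x : ℕ} :
    picked s p (h ++ [x]) =
      if mover s h.length = p then insert x (picked s p h) else picked s p h := by
  have hg : ∀ i, i < h.length → (h ++ [x]).getD i 0 = h.getD i 0 := by
    intro i hi
    rw [List.getD_eq_getElem _ 0 (by simp; omega), List.getD_eq_getElem h 0 hi,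
      List.getElem_append_left hi]
  have hgx : (h ++ [x]).getD h.length 0 = x := by
    rw [List.getD_eq_getElem _ 0 (by simp)]
    simp
  ext a
  constructor
  · intro ha
    rcases mem_picked.1 ha with ⟨i, ⟨hi, hm⟩, he⟩
    simp only [List.length_append, List.length_singleton] at hi
    rcases Nat.lt_succ_iff_lt_or_eq.1 hi with hi' | rfl
    · have : a ∈ picked s p h := mem_picked.2 ⟨i, ⟨hi', hm⟩, by rw [← hg i hi']; exact he⟩
      split <;> simp [this]
    · rw [hgx] at he
      rw [if_pos hm]
      simp [he]
  · intro ha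
    split at ha
    · rcases Finset.mem_insert.1 ha with rfl | ha'
      · exact mem_picked.2 ⟨h.length, ⟨by simp, by assumption⟩, hgx⟩
      · rcases mem_picked.1 ha' with ⟨i, ⟨hi, hm⟩, he⟩
        exact mem_picked.2 ⟨i, ⟨by simp; omega, hm⟩, by rw [hg i hi]; exact he⟩
    · rcases mem_picked.1 ha with ⟨i, ⟨hi, hm⟩, he⟩
      exact mem_picked.2 ⟨i, ⟨by simp; omega, hm⟩, by rw [hg i hi]; exact he⟩

lemma picked_append_eq {s p : Player} {h : List ℕ} {x : ℕ} (hm : mover s h.length = p) :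
    picked s p (h ++ [x]) = insert x (picked s p h) := by
  rw [picked_append, if_pos hm]

lemma picked_append_ne {s p : Player} {h : List ℕ} {x : ℕ} (hm : mover s h.length ≠ p) :
    picked s p (h ++ [x]) = picked s p h := by
  rw [picked_append, if_neg hm]

lemma valid_drop_last {G : Game} {s : Player} {h : List ℕ} {x : ℕ}
    (hv : ValidHist G s (h ++ [x])) :
    ValidHist G s h ∧ ¬ ended G s h ∧ x ∈ G.V ∧ x ∉ h := by
  obtain ⟨hnd, hmem, hend⟩ := hv
  have htake : ∀ k, k ≤ h.length → (h ++ [x]).take k = h.take k := by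
    intro k hk; exact List.take_append_of_le_length hk
  have hndh : h.Nodup := (List.nodup_append.1 hnd).1
  have hxh : x ∉ h := by
    intro hxh
    rcases List.nodup_append.1 hnd with ⟨-, -, hdisj⟩
    exact hdisj x hxh x (List.mem_singleton_self x) rfl
  refine ⟨⟨hndh, fun y hy => hmem y (by simp [hy]), fun k hk => ?_⟩, ?_, hmem x (by simp), hxh⟩
  · have := hend k (by simp; omega)
    rwa [htake k (le_of_lt hk)] at this
  · have := hend h.length (by simp)
    rwa [htake h.length le_rfl, List.take_length] at this

lemma valid_extend {G : Game} {s : Player} {h : List ℕ} {x : ℕ}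
    (hv : ValidHist G s h) (hne : ¬ ended G s h) (hxV : x ∈ G.V) (hxh : x ∉ h) :
    ValidHist G s (h ++ [x]) := by
  obtain ⟨hnd, hmem, hend⟩ := hv
  refine ⟨by simp [List.nodup_append, hnd, hxh]; intro a ha hax; exact hxh (hax ▸ ha), ?_, ?_⟩
  · intro y hy; rcases List.mem_append.1 hy with hy | hy
    · exact hmem y hy
    · simp at hy; exact hy ▸ hxV
  · intro k hk
    simp only [List.length_append, List.length_singleton] at hk
    rcases Nat.lt_succ_iff_lt_or_eq.1 hk with hk' | rfl
    · rw [List.take_append_of_le_length (le_of_lt hk')]; exact hend k hk'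
    · rw [List.take_left]; exact hne


lemma getD_concat (h : List ℕ) (x : ℕ) : (h ++ [x]).getD h.length 0 = x := by
  rw [List.getD_append_right h [x] 0 h.length le_rfl, Nat.sub_self]
  rfl

lemma follows_drop_last {s p : Player} {σ : Strategy} {h : List ℕ} {x : ℕ}
    (hf : Follows s p σ (h ++ [x])) :
    Follows s p σ h ∧ (mover s h.length = p → x = σ h) := by
  constructor
  · intro k hk hm
    have := hf k (by simp; omega) hm
    rwa [List.take_append_of_le_length (le_of_lt hk),
      List.getD_eq_getElem _ 0 (by simp; omega), List.getElem_append_left hk,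
      ← List.getD_eq_getElem h 0 hk] at this
  · intro hm
    have := hf h.length (by simp) hm
    rwa [List.take_left, getD_concat] at this

lemma follows_extend {s p : Player} {σ : Strategy} {h : List ℕ} {x : ℕ}
    (hf : Follows s p σ h) (hx : mover s h.length = p → x = σ h) :
    Follows s p σ (h ++ [x]) := by
  intro k hk hm
  simp only [List.length_append, List.length_singleton] at hk
  rcases Nat.lt_succ_iff_lt_or_eq.1 hk with hk' | rfl
  · rw [List.take_append_of_le_length (le_of_lt hk'),
      List.getD_eq_getElem _ 0 (by simp; omega), List.getElem_append_left hk',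
      ← List.getD_eq_getElem h 0 hk']
    exact hf k hk' hm
  · rw [List.take_left, getD_concat]
    exact hx hm

lemma length_le_card {G : Game} {s : Player} {h : List ℕ} (hv : ValidHist G s h) :
    h.length ≤ G.V.card := by
  have : h.toFinset ⊆ G.V := fun y hy => hv.2.1 y (List.mem_toFinset.1 hy)
  calc h.length = h.toFinset.card := (List.toFinset_card_of_nodup hv.1).symm
    _ ≤ G.V.card := Finset.card_le_card this

lemma fresh_exists {G : Game} {s : Player} {h : List ℕ} (hv : ValidHist G s h)
    (hlt : h.length < G.V.card) : ∃ v, v ∈ G.V ∧ v ∉ h := by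
  by_contra hcon
  push_neg at hcon
  have : G.V ⊆ h.toFinset := fun y hy => List.mem_toFinset.2 (hcon y hy)
  have := Finset.card_le_card this
  rw [List.toFinset_card_of_nodup hv.1] at this
  omega

lemma mover_L_iff (n : ℕ) : mover .L n = .L ↔ n % 2 = 0 := by
  unfold mover; split <;> simp_all [Player.other]

lemma mover_R_iff (n : ℕ) : mover .L n = .R ↔ ¬ (n % 2 = 0) := by
  unfold mover; split <;> simp_all [Player.other]

lemma mover_cases (n : ℕ) : mover .L n = .L ∨ mover .L n = .R := by
  unfold mover; split <;> simp [Player.other]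

def safeN (G : Game) : ℕ → List ℕ → Prop
  | 0, h => ¬ fills G.ER (picked .L .R h)
  | n+1, h => ¬ fills G.ER (picked .L .R h) ∧
      (¬ Complete G .L h →
        if mover .L h.length = .L
        then ∃ x, x ∈ G.V ∧ x ∉ h ∧ safeN G n (h ++ [x])
        else ∀ x, x ∈ G.V → x ∉ h → safeN G n (h ++ [x]))

open Classical in
noncomputable def fallback (G : Game) (h : List ℕ) : ℕ :=
  if hx : ∃ v, v ∈ G.V ∧ v ∉ h then hx.choose else 0

lemma fallback_spec {G : Game} {s : Player} {h : List ℕ} (hv : ValidHist G s h)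
    (hlt : h.length < G.V.card) : fallback G h ∈ G.V ∧ fallback G h ∉ h := by
  have hx := fresh_exists hv hlt
  rw [fallback, dif_pos hx]
  exact hx.choose_spec

lemma not_complete {G : Game} {s : Player} {h : List ℕ} (hne : ¬ ended G s h)
    (hlt : h.length < G.V.card) : ¬ Complete G s h := by
  rintro (hc | hc)
  · exact hne hc
  · omega

lemma safe_not_fills {G : Game} {n : ℕ} {h : List ℕ} (hs : safeN G n h) :
    ¬ fills G.ER (picked .L .R h) := by
  cases n with
  | zero => exact hs
  | succ n => exact hs.1

lemma not_safe_fills {G : Game} {n : ℕ} {h : List ℕ} (hs : ¬ safeN G n h)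
    (hc : Complete G .L h) : fills G.ER (picked .L .R h) := by
  cases n with
  | zero => exact not_not.1 hs
  | succ n =>
    by_contra hf
    exact hs ⟨hf, fun hnc => absurd hc hnc⟩

open Classical in
noncomputable def lstrat (G : Game) : Strategy := fun h =>
  if hx : ∃ x, x ∈ G.V ∧ x ∉ h ∧ safeN G (G.V.card - (h.length+1)) (h ++ [x])
  then hx.choose else fallback G h

lemma lstrat_invariant {G : Game} (h0 : safeN G G.V.card []) :
    ∀ h : List ℕ, ValidHist G .L h → Follows .L .L (lstrat G) h →
      safeN G (G.V.card - h.length) h := by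
  intro h
  induction h using List.reverseRecOn with
  | nil => intro _ _; simpa using h0
  | append_singleton h x ih =>
    intro hv hf
    obtain ⟨hvh, hne, hxV, hxh⟩ := valid_drop_last hv
    obtain ⟨hfh, hfx⟩ := follows_drop_last hf
    have hlen : h.length + 1 ≤ G.V.card := by
      have := length_le_card hv; simpa using this
    have ihs := ih hvh hfh
    have hfuel : G.V.card - h.length = (G.V.card - (h.length + 1)) + 1 := by omega
    rw [hfuel] at ihs
    have hcond := ihs.2 (not_complete hne (by omega))
    have hlen2 : (h ++ [x]).length = h.length + 1 := by simp
    rw [hlen2]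
    rcases mover_cases h.length with hm | hm
    · rw [if_pos hm] at hcond
      have hx : x = lstrat G h := hfx hm
      rw [lstrat, dif_pos hcond] at hx
      rw [hx]
      exact hcond.choose_spec.2.2
    · rw [if_neg (by simp [hm])] at hcond
      exact hcond x hxV hxh

lemma safe_nonlosing {G : Game} (h0 : safeN G G.V.card []) : NonLosingAs G .L .L := by
  refine ⟨lstrat G, ?_, ?_⟩
  · intro h hv hf hne hlt hm
    rw [lstrat]
    split
    · next hx => exact ⟨hx.choose_spec.1, hx.choose_spec.2.1⟩
    · exact fallback_spec hv hlt
  · intro h hv hf hc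
    have := lstrat_invariant h0 h hv hf
    exact safe_not_fills this

open Classical in
noncomputable def rstrat (G : Game) : Strategy := fun h =>
  if hx : ∃ x, x ∈ G.V ∧ x ∉ h ∧ ¬ safeN G (G.V.card - (h.length+1)) (h ++ [x])
  then hx.choose else fallback G h

lemma rstrat_invariant {G : Game} (h0 : ¬ safeN G G.V.card []) :
    ∀ h : List ℕ, ValidHist G .L h → Follows .L .R (rstrat G) h →
      ¬ safeN G (G.V.card - h.length) h := by
  intro h
  induction h using List.reverseRecOn with
  | nil => intro _ _; simpa using h0
  | append_singleton h x ih =>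
    intro hv hf
    obtain ⟨hvh, hne, hxV, hxh⟩ := valid_drop_last hv
    obtain ⟨hfh, hfx⟩ := follows_drop_last hf
    have hlen : h.length + 1 ≤ G.V.card := by
      have := length_le_card hv; simpa using this
    have ihs := ih hvh hfh
    have hfuel : G.V.card - h.length = (G.V.card - (h.length + 1)) + 1 := by omega
    rw [hfuel] at ihs
    have hnf : ¬ fills G.ER (picked .L .R h) := fun hfi => hne (Or.inr hfi)
    have hcond : ¬ (if mover .L h.length = .L
        then ∃ y, y ∈ G.V ∧ y ∉ h ∧ safeN G (G.V.card - (h.length+1)) (h ++ [y])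
        else ∀ y, y ∈ G.V → y ∉ h → safeN G (G.V.card - (h.length+1)) (h ++ [y])) := by
      intro hb
      exact ihs ⟨hnf, fun _ => hb⟩
    have hlen2 : (h ++ [x]).length = h.length + 1 := by simp
    rw [hlen2]
    rcases mover_cases h.length with hm | hm
    · rw [if_pos hm] at hcond
      push_neg at hcond
      exact hcond x hxV hxh
    · rw [if_neg (by simp [hm])] at hcond
      push_neg at hcond
      obtain ⟨y, hyV, hyh, hys⟩ := hcond
      have hx : x = rstrat G h := hfx hm
      have hex : ∃ y, y ∈ G.V ∧ y ∉ h ∧ ¬ safeN G (G.V.card - (h.length+1)) (h ++ [y]) :=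
        ⟨y, hyV, hyh, hys⟩
      rw [rstrat, dif_pos hex] at hx
      rw [hx]
      exact hex.choose_spec.2.2

lemma not_safe_rwins {G : Game} (h0 : ¬ safeN G G.V.card []) : WinsAs G .L .R := by
  refine ⟨rstrat G, ?_, ?_⟩
  · intro h hv hf hne hlt hm
    rw [rstrat]
    split
    · next hx => exact ⟨hx.choose_spec.1, hx.choose_spec.2.1⟩
    · exact fallback_spec hv hlt
  · intro h hv hf hc
    exact not_safe_fills (rstrat_invariant h0 h hv hf) hc

/-! ### Strategy stealing -/

structure Steal (G : Game) (τ : Strategy) (σ g : ℕ → ℕ) (h H : List ℕ) : Prop where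
  hv : ValidHist G .L h
  hf : Follows .L .R τ h
  Hv : ValidHist G .L H
  Hf : Follows .L .R τ H
  len : H.length + 1 = h.length ∨ (h = [] ∧ H = [])
  pickL : picked .L .L H = (picked .L .R h).image g
  pickR : ∀ y ∈ picked .L .R H, σ y ∈ picked .L .L h

section steal

variable {G : Game} {σ g : ℕ → ℕ} {τ : Strategy}

lemma H_not_ended
    (hW : ∀ h, ValidHist G .L h → Follows .L .R τ h → Complete G .L h →
      fills G.ER (picked .L .R h))
    (himg : ∀ e ∈ G.ER, e.image σ ∈ G.EL)
    {h H : List ℕ} (hs : Steal G τ σ g h H) (hne : ¬ ended G .L h) :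
    ¬ ended G .L H := by
  intro hEnd
  obtain ⟨e, heER, hesub⟩ := hW H hs.Hv hs.Hf (Or.inl hEnd)
  apply hne
  left
  refine ⟨e.image σ, himg e heER, ?_⟩
  rw [Finset.image_subset_iff]
  intro y hy
  exact hs.pickR y (hesub hy)

lemma steal_step
    (hLegal : Legal G .L .R τ)
    (hW : ∀ h, ValidHist G .L h → Follows .L .R τ h → Complete G .L h →
      fills G.ER (picked .L .R h))
    (himg : ∀ e ∈ G.ER, e.image σ ∈ G.EL)
    (hV : ∀ x ∈ G.V, σ x ∈ G.V ∧ g x ∈ G.V ∧ σ (g x) = x ∧ g (σ x) = x)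
    {h H : List ℕ} (hs : Steal G τ σ g h H) (hnc : ¬ Complete G .L h) :
    ∃ x H', Steal G τ σ g (h ++ [x]) H' := by
  have hne : ¬ ended G .L h := fun he => hnc (Or.inl he)
  have hlt : h.length < G.V.card :=
    lt_of_le_of_ne (length_le_card hs.hv) (fun he => hnc (Or.inr he))
  have hHne : ¬ ended G .L H := H_not_ended hW himg hs hne
  have hsubV : ∀ y ∈ h, y ∈ G.V := hs.hv.2.1
  rcases mover_cases h.length with hm | hm
  · -- Left's turn
    rcases hs.len with hlen | ⟨rfl, rfl⟩
    · -- h ≠ [], respond to imaginary strategy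
      have hHlt : H.length < G.V.card := by omega
      have hmH : mover .L H.length = .R := by
        rw [mover_R_iff]; rw [mover_L_iff] at hm; omega
      obtain ⟨hwV, hwH⟩ := hLegal H hs.Hv hs.Hf hHne hHlt hmH
      set w := τ H with hwdef
      have hcommon : ∀ x, x ∈ G.V → x ∉ h → (σ w ∈ h → σ w ∈ picked .L .L h) →
          (x = σ w ∨ σ w ∈ picked .L .L h) →
          Steal G τ σ g (h ++ [x]) (H ++ [w]) := by
        intro x hxV hxh _ hor
        refine ⟨valid_extend hs.hv hne hxV hxh,
          follows_extend hs.hf (fun hmm => by rw [hm] at hmm; cases hmm),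
          valid_extend hs.Hv hHne hwV hwH,
          follows_extend hs.Hf (fun _ => rfl),
          by left; simp; omega, ?_, ?_⟩
        · rw [picked_append_ne (by rw [hmH]; decide),
            picked_append_ne (by rw [hm]; decide)]
          exact hs.pickL
        · rw [picked_append_eq hmH, picked_append_eq hm]
          intro y hy
          rcases Finset.mem_insert.1 hy with rfl | hy'
          · rcases hor with rfl | hin
            · exact Finset.mem_insert_self _ _
            · exact Finset.mem_insert_of_mem hin
          · exact Finset.mem_insert_of_mem (hs.pickR y hy')
      have hkey : σ w ∈ h → σ w ∈ picked .L .L h := by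
        intro hin
        rcases mem_picked_of_mem (s := .L) hin with ⟨p, hp⟩
        cases p with
        | L => exact hp
        | R =>
          exfalso
          have : g (σ w) ∈ (picked .L .R h).image g := Finset.mem_image_of_mem g hp
          rw [← hs.pickL, (hV w hwV).2.2.2] at this
          exact hwH (mem_of_mem_picked this)
      by_cases hxw : σ w ∈ h
      · obtain ⟨x, hxV, hxh⟩ := fresh_exists hs.hv hlt
        exact ⟨x, H ++ [w], hcommon x hxV hxh hkey (Or.inr (hkey hxw))⟩
      · exact ⟨σ w, H ++ [w], hcommon (σ w) (hV w hwV).1 hxw hkey (Or.inl rfl)⟩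
    · -- h = [], H = [] : arbitrary first move
      obtain ⟨x, hxV, hxh⟩ := fresh_exists hs.hv hlt
      refine ⟨x, [], ?_⟩
      have hm0 : mover .L ([] : List ℕ).length = .L := by decide
      refine ⟨valid_extend hs.hv hne hxV hxh,
        follows_extend hs.hf (fun hmm => by rw [hm0] at hmm; cases hmm),
        hs.Hv, hs.Hf, by left; simp, ?_, ?_⟩
      · rw [picked_append_ne (p := .R) (by decide)]
        exact hs.pickL
      · intro y hy
        simp [picked] at hy
  · -- Right's turn : play τ, imaginary Left plays g (τ h)
    have hlen : H.length + 1 = h.length := by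
      rcases hs.len with hlen | ⟨rfl, rfl⟩
      · exact hlen
      · rw [show mover .L ([] : List ℕ).length = .L by decide] at hm; cases hm
    obtain ⟨hvV, hvh⟩ := hLegal h hs.hv hs.hf hne hlt hm
    set v := τ h with hvdef
    have hgvH : g v ∉ H := by
      intro hin
      rcases mem_picked_of_mem (s := .L) hin with ⟨p, hp⟩
      cases p with
      | L =>
        rw [hs.pickL] at hp
        obtain ⟨u, hu, hgu⟩ := Finset.mem_image.1 hp
        have huV : u ∈ G.V := hsubV u (mem_of_mem_picked hu)
        have : v = u := by
          rw [← (hV v hvV).2.2.1, ← (hV u huV).2.2.1, hgu]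
        exact hvh (this ▸ mem_of_mem_picked hu)
      | R =>
        have := hs.pickR _ hp
        rw [(hV v hvV).2.2.1] at this
        exact hvh (mem_of_mem_picked this)
    have hmH : mover .L H.length = .L := by
      rw [mover_L_iff]; rw [mover_R_iff] at hm; omega
    refine ⟨v, H ++ [g v], valid_extend hs.hv hne hvV hvh,
      follows_extend hs.hf (fun _ => rfl),
      valid_extend hs.Hv hHne (hV v hvV).2.1 hgvH,
      follows_extend hs.Hf (fun hmm => by rw [hmH] at hmm; cases hmm),
      by left; simp; omega, ?_, ?_⟩
    · rw [picked_append_eq hmH, picked_append_eq hm, Finset.image_insert, hs.pickL]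
    · rw [picked_append_ne (by rw [hmH]; decide),
        picked_append_ne (by rw [hm]; decide)]
      exact hs.pickR

lemma steal_exists
    (hLegal : Legal G .L .R τ)
    (hW : ∀ h, ValidHist G .L h → Follows .L .R τ h → Complete G .L h →
      fills G.ER (picked .L .R h))
    (himg : ∀ e ∈ G.ER, e.image σ ∈ G.EL)
    (hV : ∀ x ∈ G.V, σ x ∈ G.V ∧ g x ∈ G.V ∧ σ (g x) = x ∧ g (σ x) = x) :
    ∀ n (h H : List ℕ), Steal G τ σ g h H → G.V.card - h.length ≤ n →
      ∃ h' H', Steal G τ σ g h' H' ∧ Complete G .L h' := by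
  intro n
  induction n with
  | zero =>
    intro h H hs hn
    by_cases hc : Complete G .L h
    · exact ⟨h, H, hs, hc⟩
    · exfalso
      have := lt_of_le_of_ne (length_le_card hs.hv) (fun he => hc (Or.inr he))
      omega
  | succ n ih =>
    intro h H hs hn
    by_cases hc : Complete G .L h
    · exact ⟨h, H, hs, hc⟩
    · obtain ⟨x, H', hs'⟩ := steal_step hLegal hW himg hV hs hc
      exact ih (h ++ [x]) H' hs' (by simp; omega)

lemma steal_contra (hG : WellFormed G)
    (himg : ∀ e ∈ G.ER, e.image σ ∈ G.EL)
    (hpre : ∀ e ∈ G.ER, ∃ e' ∈ G.EL, e'.image σ = e)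
    (hV : ∀ x ∈ G.V, σ x ∈ G.V ∧ g x ∈ G.V ∧ σ (g x) = x ∧ g (σ x) = x)
    (hLegal : Legal G .L .R τ)
    (hW : ∀ h, ValidHist G .L h → Follows .L .R τ h → Complete G .L h →
      fills G.ER (picked .L .R h)) :
    False := by
  have hs0 : Steal G τ σ g [] [] := by
    refine ⟨⟨List.nodup_nil, by simp, by simp⟩, by intro k hk; simp at hk,
      ⟨List.nodup_nil, by simp, by simp⟩, by intro k hk; simp at hk,
      Or.inr ⟨rfl, rfl⟩, by simp [picked], by simp [picked]⟩
  obtain ⟨h, H, hs, hc⟩ := steal_exists hLegal hW himg hV G.V.card [] [] hs0 (by simp)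
  have hfill := hW h hs.hv hs.hf hc
  rcases List.eq_nil_or_concat h with rfl | ⟨h', v, rfl⟩
  · obtain ⟨e, heER, hesub⟩ := hfill
    obtain ⟨-, hene⟩ := hG.2 e heER
    obtain ⟨a, ha⟩ := hene
    have := hesub ha
    simp [picked] at this
  · simp only [List.concat_eq_append] at hs hc hfill
    obtain ⟨hvh', hneh', hvV, hvnh⟩ := valid_drop_last hs.hv
    rcases mover_cases h'.length with hm | hm
    · -- last move was Left's: Right's picks unchanged, so the game had ended before
      rw [picked_append_ne (by rw [hm]; decide)] at hfill
      exact hneh' (Or.inr hfill)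
    · -- last move was Right's: use the imaginary game
      obtain ⟨e, heER, hesub⟩ := hfill
      obtain ⟨e', he'EL, he'img⟩ := hpre e heER
      have he'sub : e' ⊆ picked .L .L H := by
        intro a ha
        have haV : a ∈ G.V := (hG.1 e' he'EL).1 ha
        have hσa : σ a ∈ picked .L .R (h' ++ [v]) := by
          apply hesub
          rw [← he'img]
          exact Finset.mem_image_of_mem σ ha
        rw [hs.pickL]
        exact Finset.mem_image.2 ⟨σ a, hσa, (hV a haV).2.2.2⟩
      have hHend : ended G .L H := Or.inl ⟨e', he'EL, he'sub⟩
      obtain ⟨e₂, he₂ER, he₂sub⟩ := hW H hs.Hv hs.Hf (Or.inl hHend)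
      apply hneh'
      left
      refine ⟨e₂.image σ, himg e₂ he₂ER, ?_⟩
      rw [Finset.image_subset_iff]
      intro y hy
      have := hs.pickR y (he₂sub hy)
      rwa [picked_append_ne (by rw [hm]; decide)] at this

end steal


/-- Strategy stealing: if there is a bijection `σ` of the vertex set such that the image
and the preimage under `σ` of every red edge are blue edges, then Left has a non-losing
strategy as first player. -/
theorem strategy_stealing (G : Game) (hG : WellFormed G) (σ : ℕ → ℕ)
    (hbij : Set.BijOn σ ↑G.V ↑G.V)
    (himg : ∀ e ∈ G.ER, e.image σ ∈ G.EL)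
    (hpre : ∀ e ∈ G.ER, ∃ e' ∈ G.EL, e'.image σ = e) :
    NonLosingAs G .L .L := by
  by_cases h0 : safeN G G.V.card []
  · exact safe_nonlosing h0
  · exfalso
    obtain ⟨τ, hLegal, hW⟩ := not_safe_rwins h0
    set g : ℕ → ℕ := Function.invFunOn σ ↑G.V with hg
    have hV : ∀ x ∈ G.V, σ x ∈ G.V ∧ g x ∈ G.V ∧ σ (g x) = x ∧ g (σ x) = x := by
      intro x hx
      have hxV : (x : ℕ) ∈ (↑G.V : Set ℕ) := hx
      have himg' : ∃ a ∈ (↑G.V : Set ℕ), σ a = x := hbij.surjOn hxV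
      refine ⟨hbij.mapsTo hxV, Function.invFunOn_mem himg', Function.invFunOn_eq himg', ?_⟩
      exact hbij.injOn.leftInvOn_invFunOn hxV
    exact steal_contra hG himg hpre hV hLegal hW
end APG
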